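/- Let n, m ∈ ℕ with m ≤ n, let ε ≥ 0, and let f : {0,1}^n → {−1,1}. For S ⊆ {1,…,n} define the Fourier coefficient f̂(S) = 2^{−n} Σ_{x ∈ {0,1}^n} f(x) ∏_{i∈S} (−1)^{x_i}, and define the average sensitivity as(f) = 2^{−n} Σ_{x ∈ {0,1}^n} |{i ∈ {1,…,n} : f(x) ≠ f(x^{⊕i})}|, where x^{⊕i} is x with its i-th bit flipped. If f̂(S)² ≤ ε for every S with |S| ≤ m, then as(f) ≥ m · (1 − ε · |{S ⊆ {1,…,n} : |S| ≤ m}|). -/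

import Mathlib

/-- The Fourier coefficient `f̂(S) = 2^{−n} Σ_x f(x) ∏_{i∈S} (−1)^{x_i}` of a function on
the Boolean cube. -/
noncomputable def boolFourierCoeff (n : ℕ) (f : (Fin n → Bool) → ℝ) (S : Finset (Fin n)) : ℝ :=
  (2 ^ n : ℝ)⁻¹ * ∑ x : Fin n → Bool, f x * ∏ i ∈ S, (if x i then (-1 : ℝ) else 1)

open Classical in
/-- The average sensitivity
`as(f) = 2^{−n} Σ_x |{i : f(x) ≠ f(x^{⊕i})}|` over the Boolean cube. -/
noncomputable def avgSens (n : ℕ) (f : (Fin n → Bool) → ℝ) : ℝ :=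
  (2 ^ n : ℝ)⁻¹ * ∑ x : Fin n → Bool,
    ((Finset.univ.filter fun i : Fin n => f (Function.update x i (!x i)) ≠ f x).card : ℝ)

open Finset

private lemma chi_orth (n : ℕ) (x y : Fin n → Bool) :
    ∑ S : Finset (Fin n),
      (∏ i ∈ S, (if x i then (-1:ℝ) else 1)) * ∏ i ∈ S, (if y i then (-1:ℝ) else 1)
      = if x = y then (2:ℝ)^n else 0 := by
  have h1 : ∀ S : Finset (Fin n),
      (∏ i ∈ S, (if x i then (-1:ℝ) else 1)) * ∏ i ∈ S, (if y i then (-1:ℝ) else 1)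
      = ∏ i ∈ S, ((if x i then (-1:ℝ) else 1) * (if y i then (-1:ℝ) else 1)) :=
    fun S => (Finset.prod_mul_distrib).symm
  simp_rw [h1]
  have h2 : ∑ S : Finset (Fin n),
        ∏ i ∈ S, ((if x i then (-1:ℝ) else 1) * (if y i then (-1:ℝ) else 1))
      = ∏ i : Fin n, (((if x i then (-1:ℝ) else 1) * (if y i then (-1:ℝ) else 1)) + 1) := by
    rw [Finset.prod_add, ← Finset.powerset_univ]
    exact Finset.sum_congr rfl fun S _ => by simp
  rw [h2]
  by_cases hxy : x = y
  · subst hxy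
    rw [if_pos rfl]
    have h3 : ∀ i ∈ (Finset.univ : Finset (Fin n)),
        ((if x i then (-1:ℝ) else 1) * (if x i then (-1:ℝ) else 1)) + 1 = 2 := by
      intro i _; cases hxi : x i <;> simp <;> norm_num
    rw [Finset.prod_congr rfl h3, Finset.prod_const, Finset.card_univ, Fintype.card_fin]
  · rw [if_neg hxy]
    obtain ⟨i, hi⟩ : ∃ i, x i ≠ y i := by
      by_contra h; push_neg at h; exact hxy (funext h)
    apply Finset.prod_eq_zero (Finset.mem_univ i)
    cases hxi : x i <;> cases hyi : y i <;> simp_all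

private lemma parseval (n : ℕ) (g : (Fin n → Bool) → ℝ) :
    ∑ S : Finset (Fin n), (boolFourierCoeff n g S)^2
      = (2 ^ n : ℝ)⁻¹ * ∑ x : Fin n → Bool, (g x)^2 := by
  have h2n : ((2:ℝ)^n) ≠ 0 := by positivity
  unfold boolFourierCoeff
  have key : ∀ S : Finset (Fin n),
      ((2 ^ n : ℝ)⁻¹ * ∑ x : Fin n → Bool, g x * ∏ i ∈ S, (if x i then (-1:ℝ) else 1))^2
      = (2 ^ n : ℝ)⁻¹ * (2 ^ n : ℝ)⁻¹ *
        ∑ x : Fin n → Bool, ∑ y : Fin n → Bool,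
          (g x * g y) * ((∏ i ∈ S, (if x i then (-1:ℝ) else 1)) *
            ∏ i ∈ S, (if y i then (-1:ℝ) else 1)) := by
    intro S
    rw [mul_pow, sq, sq, Finset.sum_mul_sum]
    simp_rw [mul_mul_mul_comm]
  simp_rw [key, ← Finset.mul_sum]
  rw [Finset.sum_comm]
  have key2 : ∀ x : Fin n → Bool,
      ∑ S : Finset (Fin n), ∑ y : Fin n → Bool,
        (g x * g y) * ((∏ i ∈ S, (if x i then (-1:ℝ) else 1)) *
          ∏ i ∈ S, (if y i then (-1:ℝ) else 1))
      = (g x)^2 * (2:ℝ)^n := by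
    intro x
    rw [Finset.sum_comm]
    have : ∀ y : Fin n → Bool,
        ∑ S : Finset (Fin n), (g x * g y) * ((∏ i ∈ S, (if x i then (-1:ℝ) else 1)) *
          ∏ i ∈ S, (if y i then (-1:ℝ) else 1))
        = (g x * g y) * (if x = y then (2:ℝ)^n else 0) := by
      intro y; rw [← Finset.mul_sum, chi_orth]
    simp_rw [this, mul_ite, mul_zero]
    rw [Finset.sum_ite_eq (Finset.univ : Finset (Fin n → Bool)) x
      (fun y => g x * g y * (2:ℝ)^n)]
    simp [sq]
  simp_rw [key2]
  rw [← Finset.sum_mul]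
  field_simp

private lemma flip_involutive (n : ℕ) (i : Fin n) :
    Function.Involutive (fun x : Fin n → Bool => Function.update x i (!x i)) := by
  intro x
  ext j
  by_cases hj : j = i
  · subst hj; simp
  · simp [Function.update_of_ne hj]

private lemma chi_flip (n : ℕ) (S : Finset (Fin n)) (i : Fin n) (x : Fin n → Bool) :
    (∏ j ∈ S, (if Function.update x i (!x i) j then (-1:ℝ) else 1))
      = (if i ∈ S then (-1:ℝ) else 1) * ∏ j ∈ S, (if x j then (-1:ℝ) else 1) := by
  by_cases hi : i ∈ S
  · rw [if_pos hi, ← Finset.mul_prod_erase S _ hi,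
      ← Finset.mul_prod_erase S (fun j => (if x j then (-1:ℝ) else 1)) hi]
    have h1 : ∀ j ∈ S.erase i,
        (if Function.update x i (!x i) j then (-1:ℝ) else 1)
          = (if x j then (-1:ℝ) else 1) := by
      intro j hj
      rw [Function.update_of_ne (Finset.ne_of_mem_erase hj)]
    rw [Finset.prod_congr rfl h1]
    have h2 : (if Function.update x i (!x i) i then (-1:ℝ) else 1)
        = -(if x i then (-1:ℝ) else 1) := by
      rw [Function.update_self]; cases x i <;> simp
    rw [h2]; ring
  · rw [if_neg hi, one_mul]
    refine Finset.prod_congr rfl fun j hj => ?_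
    rw [Function.update_of_ne]
    rintro rfl; exact hi hj

private lemma sum_flip (n : ℕ) (i : Fin n) (h : (Fin n → Bool) → ℝ) :
    ∑ x : Fin n → Bool, h (Function.update x i (!x i)) = ∑ x : Fin n → Bool, h x :=
  Fintype.sum_equiv ((flip_involutive n i).toPerm)
    (fun x => h (Function.update x i (!x i))) h (fun _ => rfl)

private lemma fourier_deriv (n : ℕ) (f : (Fin n → Bool) → ℝ) (i : Fin n)
    (S : Finset (Fin n)) :
    boolFourierCoeff n (fun x => (f x - f (Function.update x i (!x i))) / 2) S
      = if i ∈ S then boolFourierCoeff n f S else 0 := by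
  have flipA : ∑ x : Fin n → Bool,
      f (Function.update x i (!x i)) * ∏ j ∈ S, (if x j then (-1:ℝ) else 1)
      = (if i ∈ S then (-1:ℝ) else 1) *
        ∑ x : Fin n → Bool, f x * ∏ j ∈ S, (if x j then (-1:ℝ) else 1) := by
    have := sum_flip n i
      (fun x => f x * ∏ j ∈ S, (if Function.update x i (!x i) j then (-1:ℝ) else 1))
    calc ∑ x : Fin n → Bool,
        f (Function.update x i (!x i)) * ∏ j ∈ S, (if x j then (-1:ℝ) else 1)
        = ∑ x : Fin n → Bool, f x *
            ∏ j ∈ S, (if Function.update x i (!x i) j then (-1:ℝ) else 1) := by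
          rw [← this]
          refine Finset.sum_congr rfl fun x _ => ?_
          have hinv : Function.update (Function.update x i (!x i)) i
              (!(Function.update x i (!x i)) i) = x := flip_involutive n i x
          rw [hinv]
      _ = (if i ∈ S then (-1:ℝ) else 1) *
            ∑ x : Fin n → Bool, f x * ∏ j ∈ S, (if x j then (-1:ℝ) else 1) := by
          simp_rw [chi_flip]
          rw [Finset.mul_sum]
          exact Finset.sum_congr rfl fun x _ => by ring
  unfold boolFourierCoeff
  have expand : ∀ x : Fin n → Bool,
      ((f x - f (Function.update x i (!x i))) / 2) * ∏ j ∈ S, (if x j then (-1:ℝ) else 1)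
      = (f x * ∏ j ∈ S, (if x j then (-1:ℝ) else 1)) / 2
        - (f (Function.update x i (!x i)) * ∏ j ∈ S, (if x j then (-1:ℝ) else 1)) / 2 :=
    fun x => by ring
  simp_rw [expand]
  rw [Finset.sum_sub_distrib, ← Finset.sum_div, ← Finset.sum_div, flipA]
  by_cases hi : i ∈ S
  · rw [if_pos hi, if_pos hi]; ring
  · rw [if_neg hi, if_neg hi]; ring

open Classical in
private lemma influence (n : ℕ) (f : (Fin n → Bool) → ℝ)
    (hf : ∀ x : Fin n → Bool, f x = 1 ∨ f x = -1) (i : Fin n) :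
    (2 ^ n : ℝ)⁻¹ * ∑ x : Fin n → Bool,
        (if f (Function.update x i (!x i)) ≠ f x then (1:ℝ) else 0)
      = ∑ S ∈ Finset.univ.filter (fun S : Finset (Fin n) => i ∈ S),
          (boolFourierCoeff n f S)^2 := by
  have hg := parseval n (fun x => (f x - f (Function.update x i (!x i))) / 2)
  have hpt : ∀ x : Fin n → Bool,
      ((f x - f (Function.update x i (!x i))) / 2)^2
        = (if f (Function.update x i (!x i)) ≠ f x then (1:ℝ) else 0) := by
    intro x
    rcases hf x with h1 | h1 <;> rcases hf (Function.update x i (!x i)) with h2 | h2 <;>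
      rw [h1, h2] <;> norm_num
  simp_rw [hpt] at hg
  rw [← hg]
  rw [Finset.sum_filter]
  refine Finset.sum_congr rfl fun S _ => ?_
  rw [fourier_deriv]
  by_cases hi : i ∈ S <;> simp [hi]

open Classical in
private lemma avgSens_eq (n : ℕ) (f : (Fin n → Bool) → ℝ)
    (hf : ∀ x : Fin n → Bool, f x = 1 ∨ f x = -1) :
    avgSens n f = ∑ S : Finset (Fin n), (S.card : ℝ) * (boolFourierCoeff n f S)^2 := by
  unfold avgSens
  have hcard : ∀ x : Fin n → Bool,
      ((Finset.univ.filter fun i : Fin n => f (Function.update x i (!x i)) ≠ f x).card : ℝ)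
      = ∑ i : Fin n, (if f (Function.update x i (!x i)) ≠ f x then (1:ℝ) else 0) := by
    intro x
    exact (Finset.sum_boole _ _).symm
  simp_rw [hcard]
  rw [Finset.sum_comm, Finset.mul_sum]
  have : ∀ i : Fin n,
      (2 ^ n : ℝ)⁻¹ * ∑ x : Fin n → Bool,
          (if f (Function.update x i (!x i)) ≠ f x then (1:ℝ) else 0)
      = ∑ S ∈ Finset.univ.filter (fun S : Finset (Fin n) => i ∈ S),
          (boolFourierCoeff n f S)^2 := fun i => influence n f hf i
  simp_rw [this, Finset.sum_filter]
  rw [Finset.sum_comm]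
  refine Finset.sum_congr rfl fun S _ => ?_
  rw [← Finset.sum_filter]
  rw [Finset.sum_const]
  have : (Finset.univ.filter fun i : Fin n => i ∈ S) = S := by
    ext i; simp
  rw [this, nsmul_eq_mul]

/-- If all Fourier coefficients of `f : {0,1}^n → {−1,1}` on sets of size
at most `m ≤ n` satisfy `f̂(S)² ≤ ε`, then
`as(f) ≥ m · (1 − ε · |{S : |S| ≤ m}|)`. -/
theorem avg_sensitivity_of_small_low_degree_fourier
    (n m : ℕ) (hmn : m ≤ n) (ε : ℝ) (hε : 0 ≤ ε)
    (f : (Fin n → Bool) → ℝ) (hf : ∀ x : Fin n → Bool, f x = 1 ∨ f x = -1)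
    (hsmall : ∀ S : Finset (Fin n), S.card ≤ m → (boolFourierCoeff n f S) ^ 2 ≤ ε) :
    (m : ℝ) *
        (1 - ε * ((Finset.univ.filter fun S : Finset (Fin n) => S.card ≤ m).card : ℝ)) ≤
      avgSens n f := by
  classical
  have h2n : ((2:ℝ)^n) ≠ 0 := by positivity
  have hpars : ∑ S : Finset (Fin n), (boolFourierCoeff n f S)^2 = 1 := by
    rw [parseval]
    have hsq : ∀ x : Fin n → Bool, (f x)^2 = 1 := fun x => by
      rcases hf x with h | h <;> rw [h] <;> norm_num
    simp_rw [hsq]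
    rw [Finset.sum_const, Finset.card_univ, Fintype.card_fun, Fintype.card_bool,
      Fintype.card_fin, nsmul_eq_mul, mul_one]
    push_cast
    field_simp
  set P := fun S : Finset (Fin n) => S.card ≤ m with hP
  set A := ∑ S ∈ Finset.univ.filter P, (boolFourierCoeff n f S)^2 with hA
  set B := ∑ S ∈ Finset.univ.filter (fun S => ¬ P S), (boolFourierCoeff n f S)^2 with hB
  have hAB : A + B = 1 := by
    rw [hA, hB, Finset.sum_filter_add_sum_filter_not, hpars]
  have hAle : A ≤ ε * ((Finset.univ.filter P).card : ℝ) := by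
    rw [hA, mul_comm]
    calc ∑ S ∈ Finset.univ.filter P, (boolFourierCoeff n f S)^2
        ≤ ∑ S ∈ Finset.univ.filter P, ε :=
          Finset.sum_le_sum fun S hS => hsmall S (Finset.mem_filter.mp hS).2
      _ = ((Finset.univ.filter P).card : ℝ) * ε := by
          rw [Finset.sum_const, nsmul_eq_mul]
  have hBpos : 0 ≤ ∑ S ∈ Finset.univ.filter P, (S.card : ℝ) * (boolFourierCoeff n f S)^2 :=
    Finset.sum_nonneg fun S _ => mul_nonneg (by positivity) (sq_nonneg _)
  have hmB : (m : ℝ) * B ≤ avgSens n f := by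
    rw [avgSens_eq n f hf,
      ← Finset.sum_filter_add_sum_filter_not Finset.univ P
        (fun S => (S.card : ℝ) * (boolFourierCoeff n f S)^2)]
    have : (m : ℝ) * B ≤
        ∑ S ∈ Finset.univ.filter (fun S => ¬ P S),
          (S.card : ℝ) * (boolFourierCoeff n f S)^2 := by
      rw [hB, Finset.mul_sum]
      refine Finset.sum_le_sum fun S hS => ?_
      have hm : (m : ℝ) ≤ (S.card : ℝ) := by
        have := (Finset.mem_filter.mp hS).2
        rw [hP] at this
        exact_mod_cast le_of_lt (lt_of_not_ge this)
      exact mul_le_mul_of_nonneg_right hm (sq_nonneg _)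
    linarith
  have hm0 : (0:ℝ) ≤ (m:ℝ) := Nat.cast_nonneg m
  calc (m : ℝ) * (1 - ε * ((Finset.univ.filter P).card : ℝ))
      ≤ (m : ℝ) * (1 - A) := by
        apply mul_le_mul_of_nonneg_left _ hm0
        linarith
    _ = (m : ℝ) * B := by rw [show (1:ℝ) - A = B by linarith]
    _ ≤ avgSens n f := hmB
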